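/- Let h : [-1,1] → [-1,1] be odd, continuous, monotonically increasing with h(1) = 1, given on (-1,1) by a convergent power series ∑_{k≥0} c_{2k+1} x^{2k+1} with c₁ > 0 and c_{2k+1} ≤ 0 for all k > 0. Then the inverse function h⁻¹ : [-1,1] → [-1,1] has a power series expansion h⁻¹(x) = ∑_{k≥0} d_{2k+1} x^{2k+1} converging on all of [-1,1] with d_{2k+1} ≥ 0 for every k ≥ 0. -/

import Mathlib

open Set
namespace Stmt8aux

inductive T : Type
  | leaf : T
  | node (k : ℕ) (ch : Fin (2*k+3) → T) : T

def deg : T → ℕ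
  | .leaf => 0
  | .node k ch => k + 1 + ∑ i, deg (ch i)

noncomputable def w (c : ℕ → ℝ) : T → ℝ
  | .leaf => 1 / c 0
  | .node k ch => -c (k+1) / c 0 * ∏ i, w c (ch i)

def S : ℕ → T → Prop
  | 0, _ => False
  | _+1, .leaf => True
  | n+1, .node _ ch => ∀ i, S n (ch i)

lemma S_mono : ∀ n t, S n t → S (n+1) t := by
  intro n
  induction n with
  | zero => intro t ht; cases ht
  | succ n ih =>
    intro t ht
    cases t with
    | leaf => trivial
    | node k ch => exact fun i => ih (ch i) (ht i)

lemma S_mono' {n m : ℕ} (hnm : n ≤ m) {t : T} (ht : S n t) : S m t := by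
  induction hnm with
  | refl => exact ht
  | step _ ih => exact S_mono _ _ ih

lemma exists_S (t : T) : ∃ n, S n t := by
  induction t with
  | leaf => exact ⟨1, trivial⟩
  | node k ch ih =>
    choose N hN using ih
    refine ⟨(Finset.univ.sup N) + 1, fun i => ?_⟩
    exact S_mono' (Finset.le_sup (Finset.mem_univ i)) (hN i)

lemma w_nonneg {c : ℕ → ℝ} (hc0 : 0 < c 0) (hc : ∀ k : ℕ, 0 < k → c k ≤ 0) (t : T) :
    0 ≤ w c t := by
  induction t with
  | leaf => exact div_nonneg zero_le_one hc0.le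
  | node k ch ih =>
    refine mul_nonneg (div_nonneg (by linarith [hc (k+1) k.succ_pos]) hc0.le) ?_
    exact Finset.prod_nonneg fun i _ => ih i

def C (n : ℕ) : ℕ → Type
  | 0 => PUnit
  | k+1 => Fin (2*k+3) → {t : T // S n t}

def eS (n : ℕ) : (Σ k, C n k) ≃ {t : T // S (n+1) t} where
  toFun p :=
    match p with
    | ⟨0, _⟩ => ⟨.leaf, trivial⟩
    | ⟨k+1, v⟩ => ⟨.node k fun i => (v i).1, fun i => (v i).2⟩
  invFun t :=
    match t with
    | ⟨.leaf, _⟩ => ⟨0, PUnit.unit⟩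
    | ⟨.node k ch, hk⟩ => ⟨k+1, fun i => ⟨ch i, hk i⟩⟩
  left_inv p := by
    rcases p with ⟨_ | k, v⟩
    · rfl
    · rfl
  right_inv t := by
    rcases t with ⟨_ | ⟨k, ch⟩, ht⟩
    · rfl
    · rfl

lemma hasSum_mul_nonneg {ι κ : Type*} {f : ι → ℝ} {g : κ → ℝ} {s t : ℝ}
    (hf : HasSum f s) (hg : HasSum g t) (hf0 : ∀ i, 0 ≤ f i) (hg0 : ∀ j, 0 ≤ g j) :
    HasSum (fun q : ι × κ => f q.1 * g q.2) (s * t) :=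
  hf.mul hg (hf.summable.mul_of_nonneg hg.summable hf0 hg0)

lemma hasSum_pow {ι : Type*} {f : ι → ℝ} {s : ℝ} (hs : HasSum f s) (hf : ∀ i, 0 ≤ f i) :
    ∀ m : ℕ, HasSum (fun v : Fin m → ι => ∏ i, f (v i)) (s ^ m) := by
  intro m
  induction m with
  | zero =>
    have h1 : (fun v : Fin 0 → ι => ∏ i, f (v i)) = fun _ => 1 := by
      funext v; simp
    rw [h1, pow_zero]
    simpa using hasSum_fintype (fun _ : Fin 0 → ι => (1:ℝ))
  | succ m ih =>
    have hmul := hasSum_mul_nonneg hs ih hf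
      (fun v => Finset.prod_nonneg fun i _ => hf _)
    have heq : (fun v : Fin (m+1) → ι => ∏ i, f (v i))
        = (fun q : ι × (Fin m → ι) => f q.1 * ∏ i, f (q.2 i)) ∘ (Fin.consEquiv (fun _ : Fin (m+1) => ι)).symm := by
      funext v
      simp only [Function.comp_apply, Fin.consEquiv, Equiv.symm_mk, Equiv.coe_fn_mk, Fin.prod_univ_succ]
      rfl
    rw [pow_succ']
    rw [heq]
    exact ((Fin.consEquiv (fun _ : Fin (m+1) => ι)).symm.hasSum_iff).mpr hmul

noncomputable def useq (c0 : ℝ) (h : ℝ → ℝ) (y : ℝ) : ℕ → ℝ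
  | 0 => 0
  | n+1 => (y + (c0 * useq c0 h y n - h (useq c0 h y n))) / c0

variable {h : ℝ → ℝ} {c : ℕ → ℝ}

/-- The key induction: sums over trees of bounded depth equal the fixed point iterates. -/
lemma key (hc0 : 0 < c 0) (hc : ∀ k : ℕ, 0 < k → c k ≤ 0)
    (tailIcc : ∀ s ∈ Icc (0:ℝ) 1, HasSum (fun k : ℕ => (-c (k+1)) * s ^ (2*k+3))
      (c 0 * s - h s))
    {x : ℝ} (hx : x ∈ Icc (0:ℝ) 1)
    (hy : h x ∈ Icc (0:ℝ) 1)
    (umem : ∀ n, useq (c 0) h (h x) n ∈ Icc (0:ℝ) x) :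
    ∀ n, HasSum (fun t : {t : T // S n t} => w c t.1 * (h x) ^ (2 * deg t.1 + 1))
      (useq (c 0) h (h x) n) := by
  set y := h x with hydef
  set u := useq (c 0) h y with hu
  have hF0 : ∀ t : T, 0 ≤ w c t * y ^ (2 * deg t + 1) := fun t =>
    mul_nonneg (w_nonneg hc0 hc t) (pow_nonneg hy.1 _)
  intro n
  induction n with
  | zero =>
    haveI : IsEmpty {t : T // S 0 t} := ⟨fun tp => tp.2⟩
    have h0 : u 0 = 0 := rfl
    rw [h0]
    exact hasSum_empty
  | succ n ih =>
    have humem : u n ∈ Icc (0:ℝ) 1 := ⟨(umem n).1, le_trans (umem n).2 hx.2⟩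
    -- the fiber sums
    set G : (Σ k, C n k) → ℝ :=
      fun p => w c ((eS n) p).1 * y ^ (2 * deg ((eS n) p).1 + 1) with hG
    have hG0 : ∀ p, 0 ≤ G p := fun p => hF0 _
    -- fiber values
    set V : ℕ → ℝ := fun k =>
      Nat.casesOn k ((1 / c 0) * y) (fun j => (-c (j+1) / c 0) * (u n) ^ (2*j+3)) with hV
    have hfib : ∀ k : ℕ, HasSum (fun v : C n k => G ⟨k, v⟩) (V k) := by
      intro k
      cases k with
      | zero =>
        have : (fun v : C n 0 => G ⟨0, v⟩) = fun _ : PUnit => (1 / c 0) * y ^ (2*0+1) := by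
          funext v
          simp [hG, eS, w, deg]
        rw [this]
        have h4 := hasSum_fintype (fun _ : PUnit.{1} => (1 / c 0) * y ^ (2*0+1))
        convert h4 using 1
        simp [hV]
        exact hasSum_single PUnit.unit (fun b hb => (hb (Subsingleton.elim b _)).elim)
      | succ j =>
        have hpow := hasSum_pow ih (fun t => hF0 t.1) (2*j+3)
        have hmul := hpow.mul_left (-c (j+1) / c 0)
        have heq : (fun v : C n (j+1) => G ⟨j+1, v⟩)
            = fun v : Fin (2*j+3) → {t : T // S n t} =>
              (-c (j+1) / c 0) * ∏ i, (w c (v i).1 * y ^ (2 * deg (v i).1 + 1)) := by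
          funext v
          show w c (.node j fun i => (v i).1) * y ^ (2 * deg (.node j fun i => (v i).1) + 1) = _
          simp only [w, deg]
          rw [Finset.prod_mul_distrib, Finset.prod_pow_eq_pow_sum, mul_assoc]
          congr 2
          have hsumexp : ∑ i : Fin (2*j+3), (2 * deg (v i).1 + 1)
              = 2 * (∑ i, deg (v i).1) + (2*j+3) := by
            rw [Finset.sum_add_distrib, ← Finset.mul_sum]
            simp
          rw [hsumexp]
          ring
        rw [heq]
        exact hmul
    -- outer sum
    have houter : HasSum V (u (n+1)) := by
      have htail := (tailIcc (u n) humem).div_const (c 0)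
      have h2 : HasSum (fun j : ℕ => V (j+1)) ((c 0 * u n - h (u n)) / c 0) := by
        convert htail using 2 with j
        · rfl
        ring
      have h3 := (hasSum_nat_add_iff (f := V) 1).mp h2
      convert h3 using 1
      · rfl
      show (y + (c 0 * u n - h (u n))) / c 0 = _
      simp [hV]
      ring
    -- summability of the sigma family
    have hsig : Summable G := by
      apply (summable_sigma_of_nonneg hG0).mpr
      constructor
      · exact fun k => (hfib k).summable
      · apply Summable.congr houter.summable
        intro k
        exact ((hfib k).tsum_eq).symm
    have htot : HasSum G (u (n+1)) := houter.sigma_of_hasSum hfib hsig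
    exact ((eS n).hasSum_iff).mp htot

/-- Master: the full tree sum converges to x. -/
lemma master (hc0 : 0 < c 0) (hc : ∀ k : ℕ, 0 < k → c k ≤ 0)
    (tailIcc : ∀ s ∈ Icc (0:ℝ) 1, HasSum (fun k : ℕ => (-c (k+1)) * s ^ (2*k+3))
      (c 0 * s - h s))
    {x : ℝ} (hx : x ∈ Icc (0:ℝ) 1)
    (hy : h x ∈ Icc (0:ℝ) 1)
    (umem : ∀ n, useq (c 0) h (h x) n ∈ Icc (0:ℝ) x)
    (ulim : Filter.Tendsto (useq (c 0) h (h x)) Filter.atTop (nhds x)) :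
    HasSum (fun t : T => w c t * (h x) ^ (2 * deg t + 1)) x := by
  classical
  set y := h x with hydef
  set F : T → ℝ := fun t => w c t * y ^ (2 * deg t + 1) with hFdef
  have hF0 : ∀ t : T, 0 ≤ F t := fun t =>
    mul_nonneg (w_nonneg hc0 hc t) (pow_nonneg hy.1 _)
  have hkey := key hc0 hc tailIcc hx hy umem
  have bound : ∀ s : Finset T, ∑ t ∈ s, F t ≤ x := by
    intro s
    set n := s.sup (fun t => (exists_S t).choose) with hn
    have hSn : ∀ t ∈ s, S n t := fun t ht =>
      S_mono' (Finset.le_sup ht) (exists_S t).choose_spec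
    set s' : Finset {t : T // S n t} :=
      s.attach.image (fun a => (⟨a.1, hSn a.1 a.2⟩ : {t : T // S n t})) with hs'
    have hinj : Set.InjOn (fun a : {t // t ∈ s} => (⟨a.1, hSn a.1 a.2⟩ : {t : T // S n t}))
        s.attach := by
      intro a _ b _ hab
      simp only [Subtype.mk.injEq] at hab
      exact Subtype.ext hab
    have hsum_eq : ∑ t ∈ s, F t = ∑ a ∈ s', F a.1 := by
      rw [hs', Finset.sum_image hinj]
      rw [Finset.sum_attach s (fun t => F t)]
    rw [hsum_eq]
    have := sum_le_hasSum s' (fun t _ => hF0 t.1) (hkey n)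
    calc ∑ a ∈ s', F a.1 ≤ useq (c 0) h y n := this
    _ ≤ x := (umem n).2
  have hsummF : Summable F := summable_of_sum_le (fun t => hF0 t) bound
  have htsum_le : ∑' t : T, F t ≤ x := hsummF.tsum_le_of_sum_le bound
  have hle_tsum : ∀ n, useq (c 0) h y n ≤ ∑' t : T, F t := by
    intro n
    rw [← (hkey n).tsum_eq]
    apply Summable.tsum_le_tsum_of_inj (Subtype.val) Subtype.val_injective
      (fun t _ => hF0 t) (fun a => le_refl (F a.1)) (hkey n).summable hsummF
  have hx_le : x ≤ ∑' t : T, F t :=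
    le_of_tendsto ulim (Filter.Eventually.of_forall hle_tsum)
  have : ∑' t : T, F t = x := le_antisymm htsum_le hx_le
  rw [← this]
  exact hsummF.hasSum



lemma hsum_Icc (hmap : MapsTo h (Icc (-1 : ℝ) 1) (Icc (-1 : ℝ) 1))
    (hcont : ContinuousOn h (Icc (-1 : ℝ) 1))
    (h1 : h 1 = 1)
    (hsum : ∀ x ∈ Ioo (-1 : ℝ) 1, HasSum (fun k : ℕ => c k * x ^ (2 * k + 1)) (h x))
    (hc0 : 0 < c 0) (hc : ∀ k : ℕ, 0 < k → c k ≤ 0) :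
    ∀ u ∈ Icc (0:ℝ) 1, HasSum (fun k : ℕ => c k * u ^ (2 * k + 1)) (h u) := by
  have hb0 : ∀ k : ℕ, 0 ≤ -c (k+1) := fun k => by linarith [hc (k+1) k.succ_pos]
  have hexp : ∀ n : ℕ, 2 * (n+1) + 1 = 2 * n + 3 := fun n => by ring
  -- tail sums for t ∈ [0,1)
  have tail : ∀ t ∈ Ico (0:ℝ) 1, HasSum (fun k : ℕ => (-c (k+1)) * t ^ (2*k+3))
      (c 0 * t - h t) := by
    intro t ht
    have hts : HasSum (fun k : ℕ => c k * t ^ (2 * k + 1)) (h t) :=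
      hsum t ⟨by linarith [ht.1], ht.2⟩
    have h2 : HasSum (fun n : ℕ => c (n+1) * t ^ (2 * (n+1) + 1)) (h t - c 0 * t ^ (2*0+1)) := by
      exact (hasSum_nat_add_iff (f := fun k : ℕ => c k * t ^ (2 * k + 1)) 1).mpr
        (by simpa using hts)
    have h3 : HasSum (fun n : ℕ => -(c (n+1) * t ^ (2 * n + 3))) (c 0 * t ^ (2*0+1) - h t) := by
      have := h2.neg
      simp only [hexp] at this
      simpa [neg_sub] using this
    simpa [neg_mul] using h3
  -- bounds on partial sums of -c (k+1)
  have hbound : ∀ (F : Finset ℕ), ∑ k ∈ F, (-c (k+1)) ≤ c 0 - 1 := by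
    intro F
    set P : ℝ → ℝ := fun t => ∑ k ∈ F, (-c (k+1)) * t ^ (2*k+3) with hP
    have hPcont : Continuous P := by
      apply continuous_finset_sum
      intro k _
      exact continuous_const.mul (continuous_pow (2*k+3))
    have hPle : ∀ t ∈ Ioo (0:ℝ) 1, P t ≤ c 0 * t - h t := by
      intro t ht
      exact Summable.sum_le_tsum F (fun k _ => mul_nonneg (hb0 k) (pow_nonneg ht.1.le _))
        (tail t ⟨ht.1.le, ht.2⟩).summable |>.trans_eq (tail t ⟨ht.1.le, ht.2⟩).tsum_eq
    have hmemIoo : Ioo (0:ℝ) 1 ∈ nhdsWithin (1:ℝ) (Iio 1) :=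
      Ioo_mem_nhdsLT_of_mem ⟨zero_lt_one, le_refl 1⟩
    have hPt : Filter.Tendsto P (nhdsWithin (1:ℝ) (Iio 1)) (nhds (P 1)) :=
      (hPcont.tendsto 1).mono_left nhdsWithin_le_nhds
    have hht : Filter.Tendsto (fun t => c 0 * t - h t) (nhdsWithin (1:ℝ) (Iio 1))
        (nhds (c 0 * 1 - 1)) := by
      have hh : Filter.Tendsto h (nhdsWithin (1:ℝ) (Icc (-1:ℝ) 1)) (nhds 1) := by
        have := (hcont 1 ⟨by norm_num, le_refl 1⟩)
        rw [ContinuousWithinAt] at this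
        rwa [h1] at this
      have hmono' : nhdsWithin (1:ℝ) (Iio 1) ≤ nhdsWithin (1:ℝ) (Icc (-1:ℝ) 1) := by
        rw [← nhdsWithin_Ioo_eq_nhdsLT (show (0:ℝ) < 1 by norm_num)]
        exact nhdsWithin_mono 1 (fun t ht => ⟨by linarith [ht.1], ht.2.le⟩)
      exact ((continuous_const.mul continuous_id).tendsto 1).mono_left nhdsWithin_le_nhds
        |>.sub (hh.mono_left hmono')
    have hev : ∀ᶠ t in nhdsWithin (1:ℝ) (Iio 1), P t ≤ c 0 * t - h t :=
      Filter.eventually_of_mem hmemIoo hPle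
    have hP1 : P 1 ≤ c 0 * 1 - 1 := le_of_tendsto_of_tendsto hPt hht hev
    calc ∑ k ∈ F, (-c (k+1)) = P 1 := by simp [hP]
    _ ≤ c 0 - 1 := by linarith
  have hBsumm : Summable (fun k : ℕ => -c (k+1)) :=
    summable_of_sum_le hb0 hbound
  have hAle : ∑' k : ℕ, (-c (k+1)) ≤ c 0 - 1 := hBsumm.tsum_le_of_sum_le hbound
  have hAge : c 0 - 1 ≤ ∑' k : ℕ, (-c (k+1)) := by
    have hle : ∀ t ∈ Ioo (0:ℝ) 1, c 0 * t - h t ≤ ∑' k : ℕ, (-c (k+1)) := by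
      intro t ht
      rw [← (tail t ⟨ht.1.le, ht.2⟩).tsum_eq]
      apply Summable.tsum_le_tsum _ (tail t ⟨ht.1.le, ht.2⟩).summable hBsumm
      intro k
      have : t ^ (2*k+3) ≤ 1 := pow_le_one₀ ht.1.le ht.2.le
      nlinarith [hb0 k, pow_nonneg ht.1.le (2*k+3)]
    have hht : Filter.Tendsto (fun t => c 0 * t - h t) (nhdsWithin (1:ℝ) (Iio 1))
        (nhds (c 0 * 1 - 1)) := by
      have hh : Filter.Tendsto h (nhdsWithin (1:ℝ) (Icc (-1:ℝ) 1)) (nhds 1) := by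
        have := (hcont 1 ⟨by norm_num, le_refl 1⟩)
        rw [ContinuousWithinAt] at this
        rwa [h1] at this
      have hmono' : nhdsWithin (1:ℝ) (Iio 1) ≤ nhdsWithin (1:ℝ) (Icc (-1:ℝ) 1) := by
        rw [← nhdsWithin_Ioo_eq_nhdsLT (show (0:ℝ) < 1 by norm_num)]
        exact nhdsWithin_mono 1 (fun t ht => ⟨by linarith [ht.1], ht.2.le⟩)
      exact ((continuous_const.mul continuous_id).tendsto 1).mono_left nhdsWithin_le_nhds
        |>.sub (hh.mono_left hmono')
    have hev : ∀ᶠ t in nhdsWithin (1:ℝ) (Iio 1), (fun t => c 0 * t - h t) t ≤ ∑' k : ℕ, (-c (k+1)) :=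
      Filter.eventually_of_mem (Ioo_mem_nhdsLT_of_mem ⟨zero_lt_one, le_refl 1⟩) hle
    have := le_of_tendsto hht hev
    linarith
  have hA : ∑' k : ℕ, (-c (k+1)) = c 0 - 1 := le_antisymm hAle hAge
  -- now the main statement
  intro u hu
  rcases eq_or_lt_of_le hu.2 with hu1 | hu1
  · -- u = 1
    subst hu1
    simp only [one_pow, mul_one]
    have hcs : Summable c := by
      rw [← summable_nat_add_iff 1]
      simpa using hBsumm.neg
    have htsum : ∑' k, c k = 1 := by
      rw [hcs.tsum_eq_zero_add]
      have : ∑' k : ℕ, c (k+1) = -(∑' k : ℕ, -c (k+1)) := by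
        rw [← tsum_neg]; simp
      rw [this, hA]; ring
    rw [h1, ← htsum]
    exact hcs.hasSum
  · exact hsum u ⟨by linarith [hu.1], hu1⟩



lemma useq_lemmas
    (hmono : StrictMonoOn h (Icc (-1 : ℝ) 1))
    (hcont : ContinuousOn h (Icc (-1 : ℝ) 1))
    (h0 : h 0 = 0)
    (hc0 : 0 < c 0)
    (gnn : ∀ s ∈ Icc (0:ℝ) 1, 0 ≤ c 0 * s - h s)
    (gmono : ∀ s ∈ Icc (0:ℝ) 1, ∀ s' ∈ Icc (0:ℝ) 1, s ≤ s' →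
      c 0 * s - h s ≤ c 0 * s' - h s')
    {x : ℝ} (hx : x ∈ Icc (0:ℝ) 1) :
    (∀ n, useq (c 0) h (h x) n ∈ Icc (0:ℝ) x) ∧
      Filter.Tendsto (useq (c 0) h (h x)) Filter.atTop (nhds x) := by
  set y := h x with hy
  have hxI : x ∈ Icc (-1:ℝ) 1 := ⟨by linarith [hx.1], hx.2⟩
  have h0I : (0:ℝ) ∈ Icc (-1:ℝ) 1 := ⟨by norm_num, by norm_num⟩
  have hy0 : 0 ≤ y := by
    rw [hy, ← h0]
    exact hmono.monotoneOn h0I hxI hx.1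
  set u := useq (c 0) h y with hu
  have hrec : ∀ n, u (n+1) = (y + (c 0 * u n - h (u n))) / c 0 := fun n => rfl
  have umem : ∀ n, u n ∈ Icc (0:ℝ) x := by
    intro n
    induction n with
    | zero => exact ⟨le_refl 0, hx.1⟩
    | succ n ih =>
      have hn1 : u n ∈ Icc (0:ℝ) 1 := ⟨ih.1, le_trans ih.2 hx.2⟩
      constructor
      · rw [hrec]
        apply div_nonneg _ hc0.le
        have := gnn (u n) hn1
        linarith
      · rw [hrec]
        rw [div_le_iff₀ hc0]
        have := gmono (u n) hn1 x hx ih.2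
        linarith
  have umono : Monotone u := by
    apply monotone_nat_of_le_succ
    intro n
    induction n with
    | zero =>
      rw [hrec]
      show (0:ℝ) ≤ _
      apply div_nonneg _ hc0.le
      have := gnn (u 0) ⟨(umem 0).1, le_trans (umem 0).2 hx.2⟩
      linarith
    | succ n ih =>
      rw [hrec, hrec, div_le_div_iff_of_pos_right hc0]
      have h1 : u n ∈ Icc (0:ℝ) 1 := ⟨(umem n).1, le_trans (umem n).2 hx.2⟩
      have h2 : u (n+1) ∈ Icc (0:ℝ) 1 := ⟨(umem (n+1)).1, le_trans (umem (n+1)).2 hx.2⟩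
      have := gmono (u n) h1 (u (n+1)) h2 ih
      linarith
  -- the limit
  have hbdd : BddAbove (Set.range u) := by
    refine ⟨x, ?_⟩
    rintro z ⟨n, rfl⟩
    exact (umem n).2
  have htend : Filter.Tendsto u Filter.atTop (nhds (⨆ n, u n)) :=
    tendsto_atTop_ciSup umono hbdd
  set L := ⨆ n, u n with hL
  have hL0 : 0 ≤ L := le_trans (umem 0).1 (le_ciSup hbdd 0)
  have hLx : L ≤ x := ciSup_le fun n => (umem n).2
  have hLI : L ∈ Icc (-1:ℝ) 1 := ⟨by linarith, le_trans hLx hx.2⟩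
  have hgL : Filter.Tendsto (fun n => c 0 * u n - h (u n)) Filter.atTop
      (nhds (c 0 * L - h L)) := by
    have hgc : ContinuousOn (fun s => c 0 * s - h s) (Icc (-1:ℝ) 1) :=
      ((continuous_const.mul continuous_id).continuousOn).sub hcont
    have htend' : Filter.Tendsto u Filter.atTop (nhdsWithin L (Icc (-1:ℝ) 1)) := by
      apply tendsto_nhdsWithin_of_tendsto_nhds_of_eventually_within _ htend
      exact Filter.Eventually.of_forall fun n => ⟨by linarith [(umem n).1], le_trans (umem n).2 hx.2⟩
    exact (hgc L hLI).tendsto.comp htend'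
  have hLfix : L = (y + (c 0 * L - h L)) / c 0 := by
    apply tendsto_nhds_unique ((Filter.tendsto_add_atTop_iff_nat 1).mpr htend)
    have : Filter.Tendsto (fun n => (y + (c 0 * u n - h (u n))) / c 0) Filter.atTop
        (nhds ((y + (c 0 * L - h L)) / c 0)) := (hgL.const_add y).div_const (c 0)
    simpa only [← hrec] using this
  have hhL : h L = y := by
    field_simp at hLfix
    linarith
  have hLeqx : L = x := hmono.injOn hLI hxI (by rw [hhL])
  rw [hLeqx] at htend
  exact ⟨umem, htend⟩


end Stmt8aux

open Real Set Stmt8aux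

/-- If h : [-1,1] → [-1,1] is odd, continuous, monotonically increasing, h(1)=1, given
on (-1,1) by a convergent power series ∑ c_{2k+1} x^{2k+1} with c₁ > 0 and c_{2k+1} ≤ 0
for k > 0, then the inverse h⁻¹ : [-1,1] → [-1,1] has a power series expansion
∑ d_{2k+1} y^{2k+1} converging on all of [-1,1], with all coefficients nonnegative.
(The inverse is encoded by requiring the d-series evaluated at h(x) to sum to x.) -/
theorem stmt_8 (h : ℝ → ℝ) (c : ℕ → ℝ)
    (hmap : MapsTo h (Icc (-1 : ℝ) 1) (Icc (-1 : ℝ) 1))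
    (hodd : ∀ x ∈ Icc (-1 : ℝ) 1, h (-x) = -h x)
    (hcont : ContinuousOn h (Icc (-1 : ℝ) 1))
    (hmono : StrictMonoOn h (Icc (-1 : ℝ) 1))
    (h1 : h 1 = 1)
    (hsum : ∀ x ∈ Ioo (-1 : ℝ) 1, HasSum (fun k : ℕ => c k * x ^ (2 * k + 1)) (h x))
    (hc0 : 0 < c 0) (hc : ∀ k : ℕ, 0 < k → c k ≤ 0) :
    ∃ d : ℕ → ℝ, (∀ k, 0 ≤ d k) ∧
      ∀ x ∈ Icc (-1 : ℝ) 1, HasSum (fun k : ℕ => d k * (h x) ^ (2 * k + 1)) x := by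
  classical
  have hb0 : ∀ k : ℕ, 0 ≤ -c (k+1) := fun k => by linarith [hc (k+1) k.succ_pos]
  have hexp : ∀ n : ℕ, 2 * (n+1) + 1 = 2 * n + 3 := fun n => by ring
  have h0 : h 0 = 0 := by
    have := hodd 0 ⟨by norm_num, by norm_num⟩
    rw [neg_zero] at this
    linarith
  have hS := hsum_Icc hmap hcont h1 hsum hc0 hc
  have tailIcc : ∀ s ∈ Icc (0:ℝ) 1, HasSum (fun k : ℕ => (-c (k+1)) * s ^ (2*k+3))
      (c 0 * s - h s) := by
    intro t ht
    have hts := hS t ht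
    have h2 : HasSum (fun n : ℕ => c (n+1) * t ^ (2 * (n+1) + 1))
        (h t - c 0 * t ^ (2*0+1)) :=
      (hasSum_nat_add_iff (f := fun k : ℕ => c k * t ^ (2 * k + 1)) 1).mpr
        (by simpa using hts)
    have h3 : HasSum (fun n : ℕ => -(c (n+1) * t ^ (2 * n + 3))) (c 0 * t ^ (2*0+1) - h t) := by
      have := h2.neg
      simp only [hexp] at this
      simpa [neg_sub] using this
    simpa [neg_mul] using h3
  have gnn : ∀ s ∈ Icc (0:ℝ) 1, 0 ≤ c 0 * s - h s := by
    intro s hs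
    exact hasSum_le (fun k => mul_nonneg (hb0 k) (pow_nonneg hs.1 _))
      hasSum_zero (tailIcc s hs)
  have gmono : ∀ s ∈ Icc (0:ℝ) 1, ∀ s' ∈ Icc (0:ℝ) 1, s ≤ s' →
      c 0 * s - h s ≤ c 0 * s' - h s' := by
    intro s hs s' hs' hss
    exact hasSum_le
      (fun k => mul_le_mul_of_nonneg_left (pow_le_pow_left₀ hs.1 hss _) (hb0 k))
      (tailIcc s hs) (tailIcc s' hs')
  have pos : ∀ x ∈ Icc (0:ℝ) 1,
      HasSum (fun t : T => w c t * (h x) ^ (2 * deg t + 1)) x := by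
    intro x hx
    have hxI : x ∈ Icc (-1:ℝ) 1 := ⟨by linarith [hx.1], hx.2⟩
    have hyI : h x ∈ Icc (0:ℝ) 1 := by
      constructor
      · rw [← h0]
        exact hmono.monotoneOn ⟨by norm_num, by norm_num⟩ hxI hx.1
      · exact (hmap hxI).2
    obtain ⟨umem, ulim⟩ := useq_lemmas hmono hcont h0 hc0 gnn gmono hx
    exact master hc0 hc tailIcc hx hyI umem ulim
  have hw1 : HasSum (fun t : T => w c t) 1 := by
    have := pos 1 ⟨zero_le_one, le_refl 1⟩
    rw [h1] at this
    simpa using this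
  set d : ℕ → ℝ := fun k => ∑' t : {t : T // deg t = k}, w c t.1 with hd
  refine ⟨d, fun k => tsum_nonneg (fun t => w_nonneg hc0 hc t.1), ?_⟩
  have fib : ∀ (yv : ℝ) (k : ℕ),
      HasSum (fun t : {t : T // deg t = k} => w c t.1 * yv ^ (2*k+1)) (d k * yv ^ (2*k+1)) := by
    intro yv k
    have hsub : Summable (fun t : {t : T // deg t = k} => w c t.1) :=
      hw1.summable.subtype {t : T | deg t = k}
    exact hsub.hasSum.mul_right _
  have posd : ∀ x ∈ Icc (0:ℝ) 1, HasSum (fun k : ℕ => d k * (h x) ^ (2*k+1)) x := by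
    intro x hx
    have hTsum := pos x hx
    have heqf : (fun p : Σ k : ℕ, {t : T // deg t = k} => w c p.2.1 * (h x) ^ (2*p.1+1))
        = (fun t : T => w c t * (h x) ^ (2 * deg t + 1)) ∘ (Equiv.sigmaFiberEquiv deg) := by
      funext p
      simp only [Function.comp_apply, Equiv.sigmaFiberEquiv, Equiv.coe_fn_mk]
      rw [p.2.2]
    have hsig : HasSum (fun p : Σ k : ℕ, {t : T // deg t = k} =>
        w c p.2.1 * (h x) ^ (2*p.1+1)) x := by
      rw [heqf]
      exact ((Equiv.sigmaFiberEquiv deg).hasSum_iff).mpr hTsum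
    exact hsig.sigma (fun k => fib (h x) k)
  intro x hx
  rcases le_or_gt 0 x with hx0 | hx0
  · have := posd x ⟨hx0, hx.2⟩
    simpa [hexp] using this
  · have hx' : -x ∈ Icc (0:ℝ) 1 := ⟨by linarith, by linarith [hx.1]⟩
    have hpos := posd (-x) hx'
    have hhx : h x = -(h (-x)) := by
      have := hodd (-x) ⟨by linarith [hx.2], by linarith [hx.1]⟩
      rw [neg_neg] at this
      linarith
    have heq2 : (fun k : ℕ => d k * (h x) ^ (2*k+1))
        = fun k : ℕ => -(d k * (h (-x)) ^ (2*k+1)) := by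
      funext k
      rw [hhx, Odd.neg_pow ⟨k, by ring⟩]
      ring
    rw [heq2]
    simpa using hpos.neg
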